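/- Suppose q = 2 and 0 < b < 1, or q > 2 and 0 < b ≤ q−1. Then ψ(k) := 1 + b·k^q − k^{2q−2} − b·k^{q−2} > 0 for all k ∈ (0,1). Consequently, the nonlinearity f(r,z₁,z₂) = −z₁ + z₁^{2q−1} + b·z₁^{q−1}·z₂^q satisfies f(r,z₁,z₂)·z₂ > f(r,z₂,z₁)·z₁ for all z₁ > z₂ > 0 and all r > 0. -/

import Mathlib

open Real Set

lemma aux_hH {q x : ℝ} (hq : 2 < q) (hx : 0 < x) (hx1 : x < 1) :
    q * x ^ 2 < 2 * x ^ q + (q - 2) := by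
  have hxq : x ^ q = x ^ (q - 2) * x ^ 2 := by
    rw [show q = (q - 2) + 2 by ring, Real.rpow_add hx, Real.rpow_two]
    ring_nf
  set u := x ^ (q - 2) with hu
  rcases le_or_gt 3 q with h3 | h3
  · -- Bernoulli, convex case
    have hber : 1 + (q - 2) * (x - 1) ≤ u := by
      have := one_add_mul_self_le_rpow_one_add (s := x - 1) (by linarith) (p := q - 2)
        (by linarith)
      rwa [show (1:ℝ) + (x - 1) = x by ring] at this
    have key : 0 < (q - 2) * ((1 - x) ^ 2 * (2 * x + 1)) :=
      mul_pos (by linarith) (mul_pos (pow_pos (by linarith) 2) (by linarith))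
    have h2 : 2 * x ^ 2 * (1 + (q - 2) * (x - 1)) ≤ 2 * x ^ 2 * u :=
      mul_le_mul_of_nonneg_left hber (by positivity)
    have expand : q * x ^ 2 - 2 * x ^ 2 * (1 + (q - 2) * (x - 1)) - (q - 2)
        = -((q - 2) * ((1 - x) ^ 2 * (2 * x + 1))) := by ring
    rw [hxq]
    nlinarith [h2, key, expand]
  · -- Bernoulli, concave case
    set C := 1 + (3 - q) * (x - 1) with hC
    have hCpos : 0 < C := by
      have : (3 - q) * (1 - x) < 1 := by nlinarith
      simp only [hC]; nlinarith
    have hber2 : x ^ (3 - q) ≤ C := by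
      have := rpow_one_add_le_one_add_mul_self (s := x - 1) (by linarith) (p := 3 - q)
        (by linarith) (by linarith)
      rwa [show (1:ℝ) + (x - 1) = x by ring] at this
    have hxC : x ≤ u * C := by
      have h1 : x ^ (3 - q) * u = x := by
        rw [hu, ← Real.rpow_add hx]; norm_num
      calc x = x ^ (3 - q) * u := h1.symm
        _ ≤ C * u := mul_le_mul_of_nonneg_right hber2 (Real.rpow_nonneg hx.le _)
        _ = u * C := by ring
    have h1 : 2 * x ^ 2 * x ≤ 2 * x ^ 2 * (u * C) :=
      mul_le_mul_of_nonneg_left hxC (by positivity)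
    have hPpos : 0 < (q - 2) * (1 - x) ^ 2 * (x + (q - 2) * (1 + x)) := by
      have h2 : (0:ℝ) < (1 - x) ^ 2 := pow_pos (by linarith) 2
      have h3' : (0:ℝ) < x + (q - 2) * (1 + x) := by nlinarith
      have := mul_pos (mul_pos (show (0:ℝ) < q - 2 by linarith) h2) h3'
      linarith
    have hP : 2 * x ^ 3 + C * (q - 2) - C * q * x ^ 2
        = (q - 2) * (1 - x) ^ 2 * (x + (q - 2) * (1 + x)) := by
      simp only [hC]; ring
    have hGC : 0 < (2 * (u * x ^ 2) + (q - 2) - q * x ^ 2) * C := by nlinarith [h1, hP, hPpos]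
    rw [hxq]
    rcases mul_pos_iff.mp hGC with ⟨hg, _⟩ | ⟨_, hg⟩ <;> linarith

lemma aux_hP {q b x : ℝ} (hq : 2 < q) (hb0 : 0 < b) (hb : b ≤ q - 1)
    (hx : 0 < x) (hx1 : x < 1) :
    b * q * x ^ 2 < (2 * q - 2) * x ^ q + b * (q - 2) := by
  have hH := aux_hH hq hx hx1
  have hxq : (0:ℝ) < x ^ q := Real.rpow_pos_of_pos hx q
  rcases le_or_gt (q * x ^ 2 - (q - 2)) 0 with hc | hc
  · have := mul_nonpos_of_nonneg_of_nonpos hb0.le hc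
    nlinarith
  · have h1 : b * (q * x ^ 2 - (q - 2)) ≤ (q - 1) * (q * x ^ 2 - (q - 2)) :=
      mul_le_mul_of_nonneg_right hb hc.le
    have h2 : (q - 1) * (q * x ^ 2 - (q - 2)) < (q - 1) * (2 * x ^ q) := by
      apply mul_lt_mul_of_pos_left _ (by linarith)
      linarith
    nlinarith

lemma aux_deriv_neg {q b x : ℝ} (hq : 2 < q) (hb0 : 0 < b) (hb : b ≤ q - 1)
    (hx : 0 < x) (hx1 : x < 1) :
    b * (q * x ^ (q - 1)) - (2 * q - 2) * x ^ (2 * q - 3) - b * ((q - 2) * x ^ (q - 3)) < 0 := by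
  have e1 : x ^ (q - 1) = x ^ (q - 3) * x ^ 2 := by
    rw [show q - 1 = (q - 3) + 2 by ring, Real.rpow_add hx, Real.rpow_two]
  have e2 : x ^ (2 * q - 3) = x ^ (q - 3) * x ^ q := by
    rw [show 2 * q - 3 = (q - 3) + q by ring, Real.rpow_add hx]
  have hP := aux_hP hq hb0 hb hx hx1
  have hpow : (0:ℝ) < x ^ (q - 3) := Real.rpow_pos_of_pos hx _
  have : b * (q * x ^ (q - 1)) - (2 * q - 2) * x ^ (2 * q - 3) - b * ((q - 2) * x ^ (q - 3))
      = (b * q * x ^ 2 - (2 * q - 2) * x ^ q - b * (q - 2)) * x ^ (q - 3) := by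
    rw [e1, e2]; ring
  rw [this]
  exact mul_neg_of_neg_of_pos (by linarith) hpow

lemma aux_psi {q b : ℝ}
    (h : (q = 2 ∧ 0 < b ∧ b < 1) ∨ (2 < q ∧ 0 < b ∧ b ≤ q - 1)) :
    ∀ k ∈ Set.Ioo (0:ℝ) 1,
      1 + b * k ^ q - k ^ (2 * q - 2) - b * k ^ (q - 2) > 0 := by
  rintro k ⟨hk, hk1⟩
  rcases h with ⟨rfl, hb0, hb1⟩ | ⟨hq, hb0, hb⟩
  · -- q = 2
    have e1 : k ^ (2 * (2:ℝ) - 2) = k ^ (2:ℝ) := by norm_num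
    have e2 : k ^ ((2:ℝ) - 2) = 1 := by
      norm_num [Real.rpow_zero]
    have h2 : k ^ (2:ℝ) < 1 := Real.rpow_lt_one hk.le hk1 (by norm_num)
    rw [e1, e2]
    nlinarith
  · -- q > 2 : monotonicity argument
    set g : ℝ → ℝ := fun x => 1 + b * x ^ q - x ^ (2 * q - 2) - b * x ^ (q - 2) with hgdef
    have hderiv : ∀ x : ℝ, 0 < x → HasDerivAt g
        (b * (q * x ^ (q - 1)) - (2 * q - 2) * x ^ (2 * q - 3)
          - b * ((q - 2) * x ^ (q - 3))) x := by
      intro x hx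
      have h1 := (Real.hasDerivAt_rpow_const (x := x) (p := q) (Or.inl hx.ne')).const_mul b
      have h2 := Real.hasDerivAt_rpow_const (x := x) (p := 2 * q - 2) (Or.inl hx.ne')
      have h3 := (Real.hasDerivAt_rpow_const (x := x) (p := q - 2) (Or.inl hx.ne')).const_mul b
      have := ((h1.const_add 1).sub h2).sub h3
      rw [show 2 * q - 2 - 1 = 2 * q - 3 by ring, show q - 2 - 1 = q - 3 by ring] at this
      exact this
    have hcont : ContinuousOn g (Icc k 1) := by
      have hc : ∀ p : ℝ, ContinuousOn (fun x : ℝ => x ^ p) (Icc k 1) := fun p =>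
        ContinuousOn.rpow_const continuousOn_id
          (fun x hx => Or.inl (ne_of_gt (lt_of_lt_of_le hk hx.1)))
      exact (((continuousOn_const.add (continuousOn_const.mul (hc q))).sub
        (hc (2 * q - 2))).sub (continuousOn_const.mul (hc (q - 2))))
    have hanti : StrictAntiOn g (Icc k 1) := by
      apply strictAntiOn_of_deriv_neg (convex_Icc k 1) hcont
      intro x hxmem
      rw [interior_Icc] at hxmem
      have hx : 0 < x := lt_trans hk hxmem.1
      rw [(hderiv x hx).deriv]
      exact aux_deriv_neg hq hb0 hb hx hxmem.2
    have := hanti ⟨le_refl k, hk1.le⟩ ⟨hk1.le, le_refl 1⟩ hk1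
    have hg1 : g 1 = 0 := by simp [hgdef, Real.one_rpow]
    rw [hg1] at this
    exact this

/-- If `q = 2, 0 < b < 1` or `q > 2, 0 < b ≤ q-1` then
`ψ(k) = 1 + b k^q − k^{2q−2} − b k^{q−2} > 0` on `(0,1)`; consequently the
nonlinearity `f(r,z₁,z₂) = -z₁ + z₁^{2q-1} + b z₁^{q-1} z₂^q` satisfies
`f(r,z₁,z₂) z₂ > f(r,z₂,z₁) z₁` for all `z₁ > z₂ > 0` and `r > 0`. -/
theorem psi_positive (q b : ℝ)
    (h : (q = 2 ∧ 0 < b ∧ b < 1) ∨ (2 < q ∧ 0 < b ∧ b ≤ q - 1)) :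
    (∀ k ∈ Set.Ioo (0:ℝ) 1,
      1 + b * k ^ q - k ^ (2 * q - 2) - b * k ^ (q - 2) > 0) ∧
    (∀ r > (0:ℝ), ∀ z₁ z₂ : ℝ, 0 < z₂ → z₂ < z₁ →
      (-z₁ + z₁ ^ (2 * q - 1) + b * z₁ ^ (q - 1) * z₂ ^ q) * z₂ >
      (-z₂ + z₂ ^ (2 * q - 1) + b * z₂ ^ (q - 1) * z₁ ^ q) * z₁) := by
  refine ⟨aux_psi h, ?_⟩
  intro r hr z₁ z₂ hz2 hlt
  have hz1 : 0 < z₁ := lt_trans hz2 hlt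
  set k : ℝ := z₂ / z₁ with hkdef
  have hk0 : 0 < k := div_pos hz2 hz1
  have hk1 : k < 1 := (div_lt_one hz1).mpr hlt
  have hψ := aux_psi h k ⟨hk0, hk1⟩
  have hz2e : z₂ = z₁ * k := by
    rw [hkdef]; field_simp
  -- power identities
  have m1 : z₂ ^ q = z₁ ^ q * k ^ q := by
    rw [hz2e, Real.mul_rpow hz1.le hk0.le]
  have m2 : z₂ ^ (2 * q - 1) = z₁ ^ (2 * q - 1) * k ^ (2 * q - 1) := by
    rw [hz2e, Real.mul_rpow hz1.le hk0.le]
  have m3 : z₂ ^ (q - 1) = z₁ ^ (q - 1) * k ^ (q - 1) := by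
    rw [hz2e, Real.mul_rpow hz1.le hk0.le]
  have a1 : z₁ ^ (2 * q - 1) = z₁ ^ (q - 1) * z₁ ^ q := by
    rw [← Real.rpow_add hz1]; ring_nf
  have a2 : k ^ (2 * q - 1) = k ^ (q - 2) * k ^ q * k := by
    rw [show 2 * q - 1 = (q - 2) + q + 1 by ring, Real.rpow_add hk0, Real.rpow_add hk0,
      Real.rpow_one]
  have a3 : k ^ (q - 1) = k ^ (q - 2) * k := by
    rw [show q - 1 = (q - 2) + 1 by ring, Real.rpow_add hk0, Real.rpow_one]
  have a4 : k ^ (2 * q - 2) = k ^ (q - 2) * k ^ q := by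
    rw [show 2 * q - 2 = (q - 2) + q by ring, Real.rpow_add hk0]
  rw [a4] at hψ
  have hpos : 0 < z₁ ^ (q - 1) * z₁ ^ q * z₁ * k :=
    mul_pos (mul_pos (mul_pos (Real.rpow_pos_of_pos hz1 _) (Real.rpow_pos_of_pos hz1 _)) hz1) hk0
  have key : (-z₁ + z₁ ^ (2 * q - 1) + b * z₁ ^ (q - 1) * z₂ ^ q) * z₂ -
      (-z₂ + z₂ ^ (2 * q - 1) + b * z₂ ^ (q - 1) * z₁ ^ q) * z₁
      = (z₁ ^ (q - 1) * z₁ ^ q * z₁ * k) *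
        (1 + b * k ^ q - k ^ (q - 2) * k ^ q - b * k ^ (q - 2)) := by
    rw [m1, m2, m3, a1, a2, a3, hz2e]
    ring
  nlinarith [mul_pos hpos hψ, key]
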